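/- arXiv:2601.07882 — 2 statements merged into one kernel-verified Lean document; each statement's English description precedes it below -/
import Mathlib

section
/- Let E be a real inner product space, let f : E → ℝ be differentiable with L-Lipschitz gradient (L > 0), let w* ∈ E satisfy ∇f(w*) = 0, and let μ > 0 with L ≥ 9μ. Suppose (w_k)_{k≥0} is a sequence in E such that, with step sizes η_k = (3/μ)/(k + L/μ) and some constant Φ ≥ 0, it holds for every k ≥ 0 that ‖w_{k+1} − w*‖² ≤ (1 − 3μ η_k)‖w_k − w*‖² + η_k² Φ. Then for every K ≥ 0, f(w_K) − f(w*) ≤ (L / (2(K + L/μ))) · [ 9Φ/(8μ²) + (L/μ + 1)‖w_0 − w*‖² ]. -/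
open intervalIntegral in
/-- Descent lemma: quadratic upper bound at a stationary point. -/
lemma descent_lemma {E : Type*} [NormedAddCommGroup E] [InnerProductSpace ℝ E]
    (f : E → ℝ) (f' : E → E) (L : ℝ) (hL : 0 < L)
    (hdiff : ∀ x, HasFDerivAt f (innerSL ℝ (f' x)) x)
    (hlip : ∀ x y, ‖f' x - f' y‖ ≤ L * ‖x - y‖)
    (wstar : E) (hstar : f' wstar = 0) (x : E) :
    f x - f wstar ≤ L / 2 * ‖x - wstar‖ ^ 2 := by
  set v := x - wstar with hv
  have hx : wstar + v = x := by rw [hv]; abel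
  have hcontf' : Continuous f' := by
    have : LipschitzWith (Real.toNNReal L) f' := by
      apply LipschitzWith.of_dist_le_mul
      intro a b
      simpa [dist_eq_norm, Real.coe_toNNReal _ hL.le] using hlip a b
    exact this.continuous
  have hg : ∀ t : ℝ, HasDerivAt (fun t : ℝ => f (wstar + t • v))
      (inner ℝ (f' (wstar + t • v)) v : ℝ) t := by
    intro t
    have hpath : HasDerivAt (fun t : ℝ => wstar + t • v) v t := by
      simpa using ((hasDerivAt_id t).smul_const v).const_add wstar
    have h := (hdiff (wstar + t • v)).comp_hasDerivAt t hpath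
    simp at h
    exact h
  have hcont : Continuous fun t : ℝ => (inner ℝ (f' (wstar + t • v)) v : ℝ) :=
    Continuous.inner (hcontf'.comp (by continuity)) continuous_const
  have hFTC : f x - f wstar
      = ∫ t in (0:ℝ)..1, (inner ℝ (f' (wstar + t • v)) v : ℝ) := by
    have h := intervalIntegral.integral_eq_sub_of_hasDerivAt
      (fun t _ => hg t) (hcont.intervalIntegrable 0 1)
    simp only [one_smul, zero_smul, add_zero] at h
    rw [h, hx]
  have hbound : ∀ t ∈ Set.Icc (0:ℝ) 1,
      (inner ℝ (f' (wstar + t • v)) v : ℝ) ≤ L * t * ‖v‖ ^ 2 := by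
    intro t ht
    have h1 : (inner ℝ (f' (wstar + t • v)) v : ℝ) ≤ ‖f' (wstar + t • v)‖ * ‖v‖ :=
      real_inner_le_norm _ _
    have h2 : ‖f' (wstar + t • v)‖ ≤ L * (t * ‖v‖) := by
      have := hlip (wstar + t • v) wstar
      simpa [hstar, norm_smul, abs_of_nonneg ht.1] using this
    calc (inner ℝ (f' (wstar + t • v)) v : ℝ) ≤ ‖f' (wstar + t • v)‖ * ‖v‖ := h1
      _ ≤ L * (t * ‖v‖) * ‖v‖ := mul_le_mul_of_nonneg_right h2 (norm_nonneg _)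
      _ = L * t * ‖v‖ ^ 2 := by ring
  rw [hFTC]
  calc (∫ t in (0:ℝ)..1, (inner ℝ (f' (wstar + t • v)) v : ℝ))
      ≤ ∫ t in (0:ℝ)..1, L * t * ‖v‖ ^ 2 := by
        apply intervalIntegral.integral_mono_on (by norm_num)
          (hcont.intervalIntegrable 0 1)
          ((by continuity : Continuous fun t : ℝ => L * t * ‖v‖^2).intervalIntegrable 0 1)
        exact hbound
    _ = L / 2 * ‖v‖ ^ 2 := by
        have h : (∫ t in (0:ℝ)..1, L * t * ‖v‖ ^ 2)
            = L * ‖v‖ ^ 2 * ∫ t in (0:ℝ)..1, t := by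
          rw [← intervalIntegral.integral_const_mul]
          congr 1; ext t; ring
        rw [h, integral_id]; ring

/-- Convergence bound of Theorem 1 (SPQFL convergence rate).
`f` is differentiable with `L`-Lipschitz gradient `f'`, `∇f(w*) = 0`, `μ > 0`, `L ≥ 9μ`,
and the squared distances to the optimum satisfy the stated recursion with step sizes
`η_k = (3/μ)/(k + L/μ)`. -/
theorem spqfl_convergence {E : Type*} [NormedAddCommGroup E] [InnerProductSpace ℝ E]
    (f : E → ℝ) (f' : E → E) (L μ : ℝ) (hL : 0 < L) (hμ : 0 < μ) (hLμ : L ≥ 9 * μ)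
    (hdiff : ∀ x, HasFDerivAt f (innerSL ℝ (f' x)) x)
    (hlip : ∀ x y, ‖f' x - f' y‖ ≤ L * ‖x - y‖)
    (wstar : E) (hstar : f' wstar = 0)
    (Φ : ℝ) (hΦ : 0 ≤ Φ)
    (η : ℕ → ℝ) (hη : ∀ k : ℕ, η k = (3 / μ) / ((k : ℝ) + L / μ))
    (w : ℕ → E)
    (hrec : ∀ k : ℕ, ‖w (k + 1) - wstar‖ ^ 2
      ≤ (1 - 3 * μ * η k) * ‖w k - wstar‖ ^ 2 + (η k) ^ 2 * Φ) :
    ∀ K : ℕ, f (w K) - f wstar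
      ≤ L / (2 * ((K : ℝ) + L / μ))
        * (9 * Φ / (8 * μ ^ 2) + (L / μ + 1) * ‖w 0 - wstar‖ ^ 2) := by
  obtain ⟨a, ha⟩ : ∃ a : ℝ, a = L / μ := ⟨_, rfl⟩
  obtain ⟨D0, hD0⟩ : ∃ D : ℝ, D = ‖w 0 - wstar‖ ^ 2 := ⟨_, rfl⟩
  have hD0nn : 0 ≤ D0 := hD0 ▸ (by positivity)
  obtain ⟨C, hC⟩ : ∃ C : ℝ, C = 9 * Φ / (8 * μ ^ 2) + (a + 1) * D0 := ⟨_, rfl⟩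
  have ha9 : (9:ℝ) ≤ a := by rw [ha, le_div_iff₀ hμ]; linarith
  have hμ2 : 0 < μ ^ 2 := by positivity
  have hΦμ : 0 ≤ 9 * Φ / μ ^ 2 := by positivity
  have hX : 9 * Φ / μ ^ 2 ≤ 8 * C := by
    have h : 8 * (9 * Φ / (8 * μ ^ 2)) = 9 * Φ / μ ^ 2 := by field_simp
    nlinarith
  have hCnn : 0 ≤ C := by linarith
  have key : ∀ k : ℕ, ‖w k - wstar‖ ^ 2 ≤ C / ((k : ℝ) + a) := by
    intro k
    induction k with
    | zero =>
      simp only [Nat.cast_zero, zero_add]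
      rw [le_div_iff₀ (by linarith : (0:ℝ) < a), ← hD0]
      have h8 : 0 ≤ 9 * Φ / (8 * μ ^ 2) := by positivity
      nlinarith
    | succ k ih =>
      obtain ⟨t, htdef⟩ : ∃ t : ℝ, t = (k : ℝ) + a := ⟨_, rfl⟩
      rw [← htdef] at ih
      have ht9 : (9:ℝ) ≤ t := by
        have : (0:ℝ) ≤ (k:ℝ) := Nat.cast_nonneg k
        rw [htdef]; linarith
      have ht0 : (0:ℝ) < t := by linarith
      have hη' : η k = (3 / μ) / t := by rw [hη k, ← ha, ← htdef]
      have hfac : 1 - 3 * μ * η k = 1 - 9 / t := by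
        rw [hη']; field_simp; ring
      have hnoise : (η k) ^ 2 * Φ = 9 * Φ / μ ^ 2 / t ^ 2 := by
        rw [hη']; field_simp; ring
      have hfacnn : 0 ≤ 1 - 9 / t := by
        rw [sub_nonneg, div_le_one ht0]; linarith
      have step1 : ‖w (k+1) - wstar‖ ^ 2
          ≤ (1 - 9 / t) * (C / t) + 9 * Φ / μ ^ 2 / t ^ 2 := by
        calc ‖w (k+1) - wstar‖ ^ 2
            ≤ (1 - 3 * μ * η k) * ‖w k - wstar‖ ^ 2 + (η k) ^ 2 * Φ := hrec k
          _ = (1 - 9 / t) * ‖w k - wstar‖ ^ 2 + 9 * Φ / μ ^ 2 / t ^ 2 := by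
              rw [hfac, hnoise]
          _ ≤ (1 - 9 / t) * (C / t) + 9 * Φ / μ ^ 2 / t ^ 2 := by gcongr
      have hcast : ((k + 1 : ℕ) : ℝ) + a = t + 1 := by push_cast; rw [htdef]; ring
      rw [hcast]
      refine step1.trans ?_
      have h1 : (1 - 9 / t) * (C / t) + 9 * Φ / μ ^ 2 / t ^ 2
          = ((t - 9) * C + 9 * Φ / μ ^ 2) / t ^ 2 := by
        field_simp
      rw [h1, div_le_div_iff₀ (by positivity) (by linarith : (0:ℝ) < t + 1)]
      nlinarith [mul_le_mul_of_nonneg_left hX (by linarith : (0:ℝ) ≤ t + 1)]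
  intro K
  have hdes := descent_lemma f f' L hL hdiff hlip wstar hstar (w K)
  have hK := key K
  have hKa : (0:ℝ) < (K:ℝ) + a := by
    have : (0:ℝ) ≤ (K:ℝ) := Nat.cast_nonneg K
    linarith
  rw [← ha, ← hD0, ← hC]
  calc f (w K) - f wstar ≤ L / 2 * ‖w K - wstar‖ ^ 2 := hdes
    _ ≤ L / 2 * (C / ((K:ℝ) + a)) := by gcongr
    _ = L / (2 * ((K : ℝ) + a)) * C := by field_simp
end

section
/- Let E be a real inner product space, G ≥ 0, T a positive integer, η > 0, and η' ≥ 0 with (η')² ≤ η/(2T). Let w' ∈ E, and for each n ∈ {1, …, N} let τ_n ≤ T be a natural number and v_{n,1}, …, v_{n,τ_n} ∈ E be vectors with ‖v_{n,t}‖ ≤ G for all t. Define w_n = w' − η' ∑_{t=1}^{τ_n} v_{n,t} and w̄ = (1/N)∑_{n=1}^N w_n. Then (1/N)∑_{n=1}^N ‖w̄ − w_n‖² ≤ (1/2) η T G². -/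
/-- Lemma 2: client-drift bound. Each of `N` devices performs at most `T`
local steps of size `η'` from a common point `w'` with update vectors of norm at most `G`,
where `η'² ≤ η/(2T)`; then the average squared divergence of the local iterates from their
mean is at most `(1/2) η T G²`. -/
theorem client_drift_bound {E : Type*} [NormedAddCommGroup E] [InnerProductSpace ℝ E]
    (G : ℝ) (hG : 0 ≤ G) (T : ℕ) (hT : 0 < T) (η : ℝ) (hη : 0 < η)
    (η' : ℝ) (hη' : 0 ≤ η') (hη'2 : η' ^ 2 ≤ η / (2 * (T : ℝ)))
    (w' : E) (N : ℕ)
    (τ : Fin N → ℕ) (hτ : ∀ n, τ n ≤ T)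
    (v : Fin N → ℕ → E) (hv : ∀ n t, ‖v n t‖ ≤ G)
    (w : Fin N → E) (hw : ∀ n, w n = w' - η' • ∑ t ∈ Finset.range (τ n), v n t)
    (wbar : E) (hwbar : wbar = (N : ℝ)⁻¹ • ∑ n, w n) :
    (N : ℝ)⁻¹ * ∑ n, ‖wbar - w n‖ ^ 2 ≤ (1 / 2) * η * (T : ℝ) * G ^ 2 := by
  have hTpos : (0:ℝ) < T := by exact_mod_cast hT
  rcases Nat.eq_zero_or_pos N with hN | hN
  · subst hN
    simp
    positivity
  have hNpos : (0:ℝ) < N := by exact_mod_cast hN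
  set s : E := w' - wbar with hs
  have hsum : ∑ n, (w' - w n) = (N:ℝ) • s := by
    rw [hs, hwbar, smul_sub, smul_smul, mul_inv_cancel₀ hNpos.ne', one_smul,
      Finset.sum_sub_distrib]
    simp [Finset.card_univ]
    module
  have key : ∑ n, ‖wbar - w n‖ ^ 2 ≤ ∑ n, ‖w' - w n‖ ^ 2 := by
    have h1 : ∑ n, ‖wbar - w n‖ ^ 2 = ∑ n, ‖(w' - w n) - s‖ ^ 2 := by
      congr 1; funext n; congr 1; rw [hs]; abel
    have h2 : ∀ n : Fin N, ‖(w' - w n) - s‖ ^ 2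
        = ‖w' - w n‖ ^ 2 - 2 * (inner ℝ (w' - w n) s : ℝ) + ‖s‖ ^ 2 := by
      intro n; exact norm_sub_sq_real _ _
    rw [h1]
    simp only [h2]
    rw [Finset.sum_add_distrib, Finset.sum_sub_distrib]
    have h3 : ∑ n : Fin N, (inner ℝ (w' - w n) s : ℝ) = (N:ℝ) * ‖s‖ ^ 2 := by
      rw [← sum_inner, hsum, real_inner_smul_left, real_inner_self_eq_norm_sq]
    rw [← Finset.mul_sum, h3]
    simp [Finset.card_univ]
    nlinarith [sq_nonneg ‖s‖, hNpos]
  have hbound : ∀ n : Fin N, ‖w' - w n‖ ^ 2 ≤ (1/2) * η * (T:ℝ) * G ^ 2 := by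
    intro n
    have h1 : ‖w' - w n‖ ≤ η' * ((T:ℝ) * G) := by
      rw [hw n]
      have : w' - (w' - η' • ∑ t ∈ Finset.range (τ n), v n t)
          = η' • ∑ t ∈ Finset.range (τ n), v n t := by abel
      rw [this, norm_smul, Real.norm_eq_abs, abs_of_nonneg hη']
      apply mul_le_mul_of_nonneg_left _ hη'
      calc ‖∑ t ∈ Finset.range (τ n), v n t‖
          ≤ ∑ t ∈ Finset.range (τ n), ‖v n t‖ := norm_sum_le _ _
        _ ≤ ∑ _t ∈ Finset.range (τ n), G := Finset.sum_le_sum fun t _ => hv n t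
        _ = (τ n : ℝ) * G := by simp [mul_comm]
        _ ≤ (T:ℝ) * G := by
            apply mul_le_mul_of_nonneg_right _ hG
            exact_mod_cast hτ n
    have h2 : ‖w' - w n‖ ^ 2 ≤ (η' * ((T:ℝ) * G)) ^ 2 :=
      pow_le_pow_left₀ (norm_nonneg _) h1 2
    calc ‖w' - w n‖ ^ 2 ≤ (η' * ((T:ℝ) * G)) ^ 2 := h2
      _ = η' ^ 2 * ((T:ℝ) * G) ^ 2 := by ring
      _ ≤ (η / (2 * (T:ℝ))) * ((T:ℝ) * G) ^ 2 := by
          apply mul_le_mul_of_nonneg_right hη'2; positivity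
      _ = (1/2) * η * (T:ℝ) * G ^ 2 := by field_simp
  calc (N:ℝ)⁻¹ * ∑ n, ‖wbar - w n‖ ^ 2
      ≤ (N:ℝ)⁻¹ * ∑ n, ‖w' - w n‖ ^ 2 := by
        apply mul_le_mul_of_nonneg_left key (by positivity)
    _ ≤ (N:ℝ)⁻¹ * ((N:ℝ) * ((1/2) * η * (T:ℝ) * G ^ 2)) := by
        apply mul_le_mul_of_nonneg_left _ (by positivity)
        calc ∑ n : Fin N, ‖w' - w n‖ ^ 2
            ≤ ∑ _n : Fin N, (1/2) * η * (T:ℝ) * G ^ 2 :=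
              Finset.sum_le_sum fun n _ => hbound n
          _ = (N:ℝ) * ((1/2) * η * (T:ℝ) * G ^ 2) := by simp [Finset.card_univ]
    _ = (1/2) * η * (T:ℝ) * G ^ 2 := by
        rw [← mul_assoc, inv_mul_cancel₀ hNpos.ne', one_mul]
end
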